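/- arXiv:0911.1815 — 3 statements merged into one kernel-verified Lean document; each statement's English description precedes it below -/
import Mathlib

section
/- If ρ: Ω → (0,∞) satisfies the 1−ε slow growth condition, i.e. ρ(α) ≤ ρ(x)(1 + |x−α|/ρ(x))^{1−ε} for all x, α ∈ Ω (with 0 < ε < 1), then ρ satisfies self-majorization of order τ = 1/ε − 1: there exists a constant C > 0 depending only on ε such that ρ(y) ≥ C ρ(x)(1 + |x−y|/ρ(x))^{−τ} for all x, y ∈ Ω. -/
/-- Slow growth implies self-majorization of order τ = 1/ε − 1. -/
theorem stmt0 (d : ℕ) (Ω : Set (EuclideanSpace ℝ (Fin d)))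
    (ρ : EuclideanSpace ℝ (Fin d) → ℝ) (ε : ℝ) (hε0 : 0 < ε) (hε1 : ε < 1)
    (hρ : ∀ x ∈ Ω, 0 < ρ x)
    (hsg : ∀ x ∈ Ω, ∀ α ∈ Ω, ρ α ≤ ρ x * (1 + dist x α / ρ x) ^ (1 - ε)) :
    ∃ C : ℝ, 0 < C ∧ ∀ x ∈ Ω, ∀ y ∈ Ω,
      ρ y ≥ C * ρ x * (1 + dist x y / ρ x) ^ (-(1 / ε - 1)) := by
  refine ⟨(2:ℝ) ^ (-(1/ε - 1)), Real.rpow_pos_of_pos two_pos _, ?_⟩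
  intro x hx y hy
  have hr : 0 < ρ x := hρ x hx
  have hu : 0 < ρ y := hρ y hy
  set r := ρ x with hrdef
  set u := ρ y with hudef
  set D := dist x y with hDdef
  have hD : 0 ≤ D := dist_nonneg
  have hrD : 0 < r + D := by linarith
  have hb1 : (1:ℝ) ≤ 1 + D / r := le_add_of_nonneg_right (by positivity)
  -- Step 1 : u ≤ r + D
  have h2 : u ≤ r + D := by
    have h := hsg x hx y hy
    have hle : (1 + D / r) ^ (1 - ε) ≤ (1 + D / r) ^ (1:ℝ) :=
      Real.rpow_le_rpow_of_exponent_le hb1 (by linarith)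
    have : u ≤ r * (1 + D / r) := by
      calc u ≤ r * (1 + D / r) ^ (1 - ε) := h
        _ ≤ r * (1 + D / r) ^ (1:ℝ) := by
            exact mul_le_mul_of_nonneg_left hle hr.le
        _ = r * (1 + D / r) := by rw [Real.rpow_one]
    calc u ≤ r * (1 + D / r) := this
      _ = r + D := by field_simp
  -- Step 2 : r ≤ u ^ ε * (u + D) ^ (1 - ε)
  have h4 : r ≤ u ^ ε * (u + D) ^ (1 - ε) := by
    have h1 := hsg y hy x hx
    rw [dist_comm] at h1
    have hE : u * (1 + D / u) ^ (1 - ε) = u ^ ε * (u + D) ^ (1 - ε) := by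
      have h0 : 1 + D / u = (u + D) / u := by field_simp
      rw [h0, Real.div_rpow (by positivity) hu.le]
      have huu : u = u ^ ε * u ^ (1 - ε) := by
        rw [← Real.rpow_add hu]; norm_num
      rw [mul_div_assoc', div_eq_iff (by positivity : (u:ℝ) ^ (1-ε) ≠ 0),
        mul_right_comm, ← huu]
    calc r ≤ u * (1 + D / u) ^ (1 - ε) := h1
      _ = u ^ ε * (u + D) ^ (1 - ε) := hE
  -- Step 3 : r ≤ u ^ ε * (2*(r + D)) ^ (1 - ε)
  have h7 : r ≤ u ^ ε * (2 * (r + D)) ^ (1 - ε) := by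
    have h5 : u + D ≤ 2 * (r + D) := by linarith
    have h6 : (u + D) ^ (1 - ε) ≤ (2 * (r + D)) ^ (1 - ε) :=
      Real.rpow_le_rpow (by positivity) h5 (by linarith)
    calc r ≤ u ^ ε * (u + D) ^ (1 - ε) := h4
      _ ≤ u ^ ε * (2 * (r + D)) ^ (1 - ε) :=
          mul_le_mul_of_nonneg_left h6 (by positivity)
  -- Step 4 : lower bound on u^ε
  have h8 : r * (2 * (r + D)) ^ (ε - 1) ≤ u ^ ε := by
    have hp : (0:ℝ) < (2 * (r + D)) ^ (1 - ε) := Real.rpow_pos_of_pos (by linarith) _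
    have hneg : (2 * (r + D)) ^ (ε - 1) = ((2 * (r + D)) ^ (1 - ε))⁻¹ := by
      rw [show ε - 1 = -(1 - ε) by ring, Real.rpow_neg (by positivity)]
    rw [hneg, mul_inv_le_iff₀ hp]
    linarith [h7]
  -- Step 5 : conclude
  rw [ge_iff_le, ← Real.rpow_le_rpow_iff (by positivity) hu.le hε0]
  have hbase : 0 ≤ (1 + D / r) ^ (-(1/ε - 1)) := by positivity
  have hc : 0 ≤ (2:ℝ) ^ (-(1/ε - 1)) := by positivity
  have hexp : -(1/ε - 1) * ε = ε - 1 := by field_simp; ring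
  have hLHS : ((2:ℝ) ^ (-(1/ε - 1)) * r * (1 + D / r) ^ (-(1/ε - 1))) ^ ε
      = r * (2 * (r + D)) ^ (ε - 1) := by
    have hrr : r ^ ε = r * r ^ (ε - 1) := by
      rw [mul_comm, ← Real.rpow_add_one hr.ne']; ring_nf
    rw [Real.mul_rpow (by positivity) hbase, Real.mul_rpow hc hr.le,
      ← Real.rpow_mul (by norm_num : (0:ℝ) ≤ 2),
      ← Real.rpow_mul (by positivity : (0:ℝ) ≤ 1 + D / r), hexp,
      show 1 + D / r = (r + D) / r by field_simp,
      Real.div_rpow hrD.le hr.le,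
      Real.mul_rpow (by norm_num : (0:ℝ) ≤ 2) hrD.le]
    field_simp
    linear_combination hrr
  rw [hLHS]
  exact h8
end

section
/- Conversely, if ρ: Ω → (0,∞) satisfies self-majorization of order τ with constant C_sm, then ρ satisfies (1−ε) slow growth with ε = 1/(τ+1), possibly up to a constant: ρ(α) ≤ C' ρ(x)(1 + |x−α|/ρ(x))^{1−ε} for all x, α ∈ Ω, where C' depends only on τ and C_sm. -/
/-- Self-majorization of order τ implies (1−ε) slow growth with ε = 1/(τ+1),
up to a constant depending only on τ and C_sm. -/
theorem stmt1 (d : ℕ) (Ω : Set (EuclideanSpace ℝ (Fin d)))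
    (ρ : EuclideanSpace ℝ (Fin d) → ℝ) (τ Csm : ℝ) (hτ : 0 < τ) (hCsm : 0 < Csm)
    (hρ : ∀ x ∈ Ω, 0 < ρ x)
    (hsm : ∀ x ∈ Ω, ∀ y ∈ Ω, ρ y ≥ Csm * ρ x * (1 + dist x y / ρ x) ^ (-τ)) :
    ∃ C' : ℝ, 0 < C' ∧ ∀ x ∈ Ω, ∀ α ∈ Ω,
      ρ α ≤ C' * ρ x * (1 + dist x α / ρ x) ^ (1 - 1 / (τ + 1)) := by
  have hτ1 : (0:ℝ) < τ + 1 := by linarith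
  set M : ℝ := (2:ℝ) ^ τ / Csm with hM
  have hMpos : 0 < M := by positivity
  refine ⟨M + M ^ (1 / (τ + 1)), by positivity, ?_⟩
  intro x hx α hα
  set t : ℝ := 1 - 1 / (τ + 1) with ht
  have htτ : t = τ / (τ + 1) := by
    rw [ht]; field_simp; ring
  have ha : 0 < ρ α := hρ α hα
  have hp : 0 < ρ x := hρ x hx
  set a := ρ α
  set p := ρ x
  set r := dist x α with hr
  have hr0 : 0 ≤ r := dist_nonneg
  have hbase : (0:ℝ) < 1 + r / p := by positivity
  -- key inequality: Csm * a ^ (τ+1) ≤ p * (a + r) ^ τ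
  have hkey : Csm * a ^ (τ + 1) ≤ p * (a + r) ^ τ := by
    have h1 := hsm α hα x hx
    have hd : dist α x = r := dist_comm α x
    rw [hd] at h1
    have h2 : Csm * a * (1 + r / a) ^ (-τ) ≤ p := h1
    have h3 : (1 + r / a) = (a + r) / a := by field_simp
    have h4 : (1 + r / a) ^ (-τ) = ((a + r) ^ τ / a ^ τ)⁻¹ := by
      rw [h3, Real.rpow_neg (by positivity), Real.div_rpow (by positivity) ha.le]
    rw [h4] at h2
    have h5 : 0 < (a + r) ^ τ / a ^ τ := by positivity
    rw [mul_inv_le_iff₀ h5] at h2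
    have h6 : a ^ (τ + 1) = a ^ τ * a := by
      rw [Real.rpow_add ha, Real.rpow_one]
    calc Csm * a ^ (τ + 1) = Csm * a * a ^ τ := by rw [h6]; ring
      _ ≤ p * ((a + r) ^ τ / a ^ τ) * a ^ τ := by
          apply mul_le_mul_of_nonneg_right h2 (by positivity)
      _ = p * (a + r) ^ τ := by field_simp
  have honet : (1:ℝ) ≤ (1 + r / p) ^ t := by
    apply Real.one_le_rpow (by nlinarith [div_nonneg hr0 hp.le])
    rw [htτ]; positivity
  rcases le_total a r with hcase | hcase
  · -- a ≤ r : a ≤ M^{1/(τ+1)} * p * (1+r/p)^t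
    have har : a + r ≤ 2 * r := by linarith
    have h7 : Csm * a ^ (τ + 1) ≤ p * (2 * r) ^ τ := by
      refine hkey.trans (mul_le_mul_of_nonneg_left ?_ hp.le)
      exact Real.rpow_le_rpow (by positivity) har hτ.le
    have hrle : r ≤ p * (1 + r / p) := by
      rw [mul_add, mul_one, mul_div_cancel₀ _ hp.ne']
      linarith
    have h8 : (2 * r) ^ τ ≤ 2 ^ τ * (p * (1 + r / p)) ^ τ := by
      rw [← Real.mul_rpow (by norm_num) (by positivity)]
      exact Real.rpow_le_rpow (by positivity) (by linarith) hτ.le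
    have h9 : a ^ (τ + 1) ≤ M * p ^ (τ + 1) * (1 + r / p) ^ τ := by
      have hb : p * (2 * r) ^ τ ≤ 2 ^ τ * (p ^ (τ + 1) * (1 + r / p) ^ τ) :=
        calc p * (2 * r) ^ τ ≤ p * (2 ^ τ * (p * (1 + r / p)) ^ τ) :=
              mul_le_mul_of_nonneg_left h8 hp.le
          _ = 2 ^ τ * (p ^ (τ + 1) * (1 + r / p) ^ τ) := by
              rw [Real.mul_rpow hp.le hbase.le, Real.rpow_add hp, Real.rpow_one]; ring
      have hc : Csm * a ^ (τ + 1) ≤ 2 ^ τ * (p ^ (τ + 1) * (1 + r / p) ^ τ) := h7.trans hb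
      have hd : M * p ^ (τ + 1) * (1 + r / p) ^ τ
          = 2 ^ τ * (p ^ (τ + 1) * (1 + r / p) ^ τ) / Csm := by
        rw [hM]; ring
      rw [hd, le_div_iff₀ hCsm]; linarith
    have h10 : a ≤ (M * p ^ (τ + 1) * (1 + r / p) ^ τ) ^ (1 / (τ + 1)) := by
      rw [← Real.rpow_le_rpow_iff ha.le (by positivity) hτ1,
        ← Real.rpow_mul (by positivity), one_div_mul_cancel hτ1.ne', Real.rpow_one]
      exact h9
    have h11 : (M * p ^ (τ + 1) * (1 + r / p) ^ τ) ^ (1 / (τ + 1))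
        = M ^ (1 / (τ + 1)) * p * (1 + r / p) ^ t := by
      rw [Real.mul_rpow (by positivity) (by positivity),
          Real.mul_rpow (by positivity) (by positivity),
          ← Real.rpow_mul hp.le, ← Real.rpow_mul hbase.le,
          mul_one_div_cancel hτ1.ne', Real.rpow_one, htτ]
      ring_nf
    have hMle : M ^ (1 / (τ + 1)) ≤ M + M ^ (1 / (τ + 1)) := by linarith
    calc a ≤ M ^ (1 / (τ + 1)) * p * (1 + r / p) ^ t := h11 ▸ h10
      _ ≤ (M + M ^ (1 / (τ + 1))) * p * (1 + r / p) ^ t := by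
          apply mul_le_mul_of_nonneg_right _ (by positivity)
          exact mul_le_mul_of_nonneg_right hMle hp.le
  · -- r ≤ a : a ≤ M * p
    have har : a + r ≤ 2 * a := by linarith
    have h7 : Csm * a ^ (τ + 1) ≤ p * (2 ^ τ * a ^ τ) := by
      refine hkey.trans (mul_le_mul_of_nonneg_left ?_ hp.le)
      calc (a + r) ^ τ ≤ (2 * a) ^ τ := Real.rpow_le_rpow (by positivity) har hτ.le
        _ = 2 ^ τ * a ^ τ := Real.mul_rpow (by norm_num) ha.le
    have h6 : a ^ (τ + 1) = a ^ τ * a := by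
      rw [Real.rpow_add ha, Real.rpow_one]
    have h8 : a ≤ M * p := by
      rw [h6] at h7
      have haτ : 0 < a ^ τ := by positivity
      rw [hM, div_mul_eq_mul_div, le_div_iff₀ hCsm]
      nlinarith [haτ]
    have hMle : M ≤ M + M ^ (1 / (τ + 1)) := by
      nlinarith [Real.rpow_nonneg hMpos.le (1 / (τ + 1))]
    calc a ≤ M * p := h8
      _ = M * p * 1 := (mul_one _).symm
      _ ≤ (M + M ^ (1 / (τ + 1))) * p * (1 + r / p) ^ t := by
          apply mul_le_mul (mul_le_mul_of_nonneg_right hMle hp.le) honet zero_le_one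
            (by positivity)
end

section
/- For every ℓ ∈ ℕ and d ≥ 1 there is a constant c_ℓ such that for every polynomial p of degree ≤ ℓ on ℝ^d and every point ξ, ‖p‖_{L∞(B(0,1))} ≤ c_ℓ ‖p‖_{L∞(B(0,1) \ B(ξ,1/2))}. -/
set_option maxHeartbeats 1000000
open MvPolynomial Metric


/-- Evaluation of a multivariate polynomial at a point of ℝ^d. -/
noncomputable def pev {d : ℕ} (p : MvPolynomial (Fin d) ℝ)
    (y : EuclideanSpace ℝ (Fin d)) : ℝ :=
  MvPolynomial.eval (fun i => y i) p

lemma pev_continuous {d : ℕ} (p : MvPolynomial (Fin d) ℝ) : Continuous (pev p) :=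
  (MvPolynomial.continuous_eval p).comp
    (continuous_pi fun i => (EuclideanSpace.proj i : EuclideanSpace ℝ (Fin d) →L[ℝ] ℝ).continuous)

/-- A polynomial vanishing on the closed unit ball is zero. -/
lemma mv_zero_of_ball {d : ℕ} {p : MvPolynomial (Fin d) ℝ}
    (h : ∀ y ∈ Metric.closedBall (0 : EuclideanSpace ℝ (Fin d)) 1, pev p y = 0) : p = 0 := by
  apply MvPolynomial.funext
  intro x
  rw [map_zero]
  set X : EuclideanSpace ℝ (Fin d) := (WithLp.toLp 2 x : EuclideanSpace ℝ (Fin d)) with hX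
  set q : Polynomial ℝ :=
    MvPolynomial.eval₂ Polynomial.C (fun i => Polynomial.C (x i) * Polynomial.X) p with hq
  have hcomp : (Polynomial.evalRingHom (1:ℝ)).comp Polynomial.C = RingHom.id ℝ := by
    ext a; simp
  have hqt : ∀ t : ℝ, q.eval t = MvPolynomial.eval (fun i => x i * t) p := by
    intro t
    have := MvPolynomial.eval₂_comp_left (Polynomial.evalRingHom t) Polynomial.C
      (fun i => Polynomial.C (x i) * Polynomial.X) p
    simp only [Polynomial.coe_evalRingHom] at this
    rw [hq, this]
    have h1 : (Polynomial.evalRingHom t).comp Polynomial.C = RingHom.id ℝ := by ext a; simp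
    rw [h1]
    show MvPolynomial.eval₂ (RingHom.id ℝ) _ p = _
    congr 1
    funext i
    simp
  set ε : ℝ := (‖X‖ + 1)⁻¹ with hε
  have hεpos : 0 < ε := by positivity
  have hroots : Set.Ioo (-ε) ε ⊆ {t | q.IsRoot t} := by
    intro t ht
    have htabs : |t| < ε := abs_lt.2 ⟨ht.1, ht.2⟩
    have hmem : t • X ∈ Metric.closedBall (0 : EuclideanSpace ℝ (Fin d)) 1 := by
      rw [Metric.mem_closedBall, dist_zero_right, norm_smul]
      have h2 : ‖t‖ * ‖X‖ < ε * (‖X‖ + 1) := by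
        calc ‖t‖ * ‖X‖ ≤ ‖t‖ * (‖X‖ + 1) := by
              apply mul_le_mul_of_nonneg_left (by linarith) (norm_nonneg t)
          _ < ε * (‖X‖ + 1) := by
              apply mul_lt_mul_of_pos_right _ (by positivity)
              rwa [Real.norm_eq_abs]
      rw [hε] at h2
      rw [inv_mul_cancel₀ (by positivity)] at h2
      linarith
    have := h (t • X) hmem
    show q.eval t = 0
    rw [hqt t]
    have hfun : (fun i => x i * t) = (fun i => (t • X) i) := by
      funext i
      show x i * t = (t • X) i
      simp [hX, mul_comm]
    rw [hfun]
    exact this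
  have hq0 : q = 0 := by
    apply Polynomial.eq_zero_of_infinite_isRoot
    exact Set.Infinite.mono hroots (Set.Ioo_infinite (by linarith))
  have := hqt 1
  rw [hq0] at this
  simp only [Polynomial.eval_zero] at this
  have hfun : (fun i => x i * 1) = x := by funext i; simp
  rw [hfun] at this
  exact this.symm

lemma totalDegree_bind₁_le {d : ℕ} (f : Fin d → MvPolynomial (Fin d) ℝ)
    (hf : ∀ i, (f i).totalDegree ≤ 1) (p : MvPolynomial (Fin d) ℝ) :
    (MvPolynomial.bind₁ f p).totalDegree ≤ p.totalDegree := by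
  conv_lhs => rw [p.as_sum]
  rw [map_sum]
  refine (MvPolynomial.totalDegree_finset_sum _ _).trans (Finset.sup_le fun v hv => ?_)
  rw [MvPolynomial.bind₁_monomial]
  refine (MvPolynomial.totalDegree_mul _ _).trans ?_
  rw [MvPolynomial.totalDegree_C, zero_add]
  refine (MvPolynomial.totalDegree_finset_prod _ _).trans ?_
  refine le_trans (Finset.sum_le_sum fun i _ =>
    (MvPolynomial.totalDegree_pow _ _).trans (Nat.mul_le_mul_left _ (hf i))) ?_
  simp only [mul_one]
  exact MvPolynomial.le_totalDegree hv

lemma exists_far_point {d : ℕ} (hd : 1 ≤ d) (ξ : EuclideanSpace ℝ (Fin d)) :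
    ∃ x : EuclideanSpace ℝ (Fin d), ‖x‖ = 3/4 ∧ 3/4 ≤ dist x ξ := by
  by_cases h : ξ = 0
  · refine ⟨EuclideanSpace.single ⟨0, hd⟩ ((3:ℝ)/4), ?_, ?_⟩
    · rw [EuclideanSpace.norm_single]; norm_num
    · rw [h, dist_zero_right, EuclideanSpace.norm_single]; norm_num
  · have hξ : 0 < ‖ξ‖ := norm_pos_iff.2 h
    refine ⟨(-((3/4) * ‖ξ‖⁻¹)) • ξ, ?_, ?_⟩
    · rw [norm_smul, Real.norm_eq_abs, abs_neg, abs_of_pos (by positivity)]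
      field_simp
    · rw [dist_eq_norm]
      have heq : (-((3/4) * ‖ξ‖⁻¹)) • ξ - ξ = -((((3:ℝ)/4) * ‖ξ‖⁻¹ + 1) • ξ) := by
        module
      rw [heq, norm_neg, norm_smul, Real.norm_eq_abs, abs_of_pos (by positivity),
        add_mul, one_mul, mul_assoc, inv_mul_cancel₀ (ne_of_gt hξ), mul_one]
      linarith


/-- Restriction of a polynomial of degree at most ℓ to the closed ball of radius r,
as a linear map into continuous functions. -/
noncomputable def restrB (d ℓ : ℕ) (r : ℝ) :
    MvPolynomial.restrictTotalDegree (Fin d) ℝ ℓ →ₗ[ℝ]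
      C(Metric.closedBall (0 : EuclideanSpace ℝ (Fin d)) r, ℝ) where
  toFun p := ⟨fun y => pev p.1 y.1, (pev_continuous p.1).comp continuous_subtype_val⟩
  map_add' p q := by
    ext y
    simp [pev, map_add]
  map_smul' c p := by
    ext y
    simp [pev, MvPolynomial.smul_eq_C_mul]

lemma restrB_apply {d ℓ : ℕ} {r : ℝ} (p : MvPolynomial.restrictTotalDegree (Fin d) ℝ ℓ)
    (y : Metric.closedBall (0 : EuclideanSpace ℝ (Fin d)) r) :
    restrB d ℓ r p y = pev p.1 y.1 := rfl


/-- There is a constant c_ℓ, depending only on ℓ and d, such that the sup norm of any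
polynomial of degree ≤ ℓ on B(0,1) is controlled by its sup norm on B(0,1) \ B(ξ,1/2),
uniformly in ξ. -/
theorem stmt7 (d ℓ : ℕ) (hd : 1 ≤ d) :
    ∃ c : ℝ, 0 < c ∧ ∀ p : MvPolynomial (Fin d) ℝ, p.totalDegree ≤ ℓ →
      ∀ (ξ : EuclideanSpace ℝ (Fin d)) (B : ℝ), 0 ≤ B →
        (∀ z ∈ Metric.ball (0 : EuclideanSpace ℝ (Fin d)) 1 \ Metric.ball ξ (1/2),
          |pev p z| ≤ B) →
        ∀ y ∈ Metric.ball (0 : EuclideanSpace ℝ (Fin d)) 1, |pev p y| ≤ c * B := by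
  classical
  haveI h1c : CompactSpace (Metric.closedBall (0 : EuclideanSpace ℝ (Fin d)) 1) :=
    isCompact_iff_compactSpace.mp (isCompact_closedBall _ _)
  haveI h14c : CompactSpace (Metric.closedBall (0 : EuclideanSpace ℝ (Fin d)) 14) :=
    isCompact_iff_compactSpace.mp (isCompact_closedBall _ _)
  obtain ⟨c₀, hc₀, hc⟩ : ∃ c₀ : ℝ, 0 ≤ c₀ ∧
      ∀ v : MvPolynomial.restrictTotalDegree (Fin d) ℝ ℓ,
        ‖restrB d ℓ 14 v‖ ≤ c₀ * ‖restrB d ℓ 1 v‖ := by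
    have hTinj : Function.Injective (restrB d ℓ 1) := by
      intro a b hab
      have hz : restrB d ℓ 1 (a - b) = 0 := by rw [map_sub, hab, sub_self]
      have hz' : (a - b : MvPolynomial.restrictTotalDegree (Fin d) ℝ ℓ).1 = 0 := by
        apply mv_zero_of_ball
        intro y hy
        have := ContinuousMap.ext_iff.mp hz ⟨y, hy⟩
        rwa [restrB_apply] at this
      exact sub_eq_zero.mp (Subtype.ext hz')
    haveI : FiniteDimensional ℝ (LinearMap.range (restrB d ℓ 1)) :=
      (restrB d ℓ 1).finiteDimensional_range
    letI : Norm (LinearMap.range (restrB d ℓ 1) →L[ℝ]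
        C(Metric.closedBall (0 : EuclideanSpace ℝ (Fin d)) 14, ℝ)) :=
      @ContinuousLinearMap.hasOpNorm _ _ _ _ (Submodule.seminormedAddCommGroup _) _ _ _
        (Submodule.normedSpace _) _ _
    set e := LinearEquiv.ofInjective _ hTinj with he
    set Φ : LinearMap.range (restrB d ℓ 1) →L[ℝ]
        C(Metric.closedBall (0 : EuclideanSpace ℝ (Fin d)) 14, ℝ) := LinearMap.toContinuousLinearMap
      ((restrB d ℓ 14) ∘ₗ (e.symm : LinearMap.range (restrB d ℓ 1) →ₗ[ℝ] _)) with hΦ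
    refine ⟨‖Φ‖, @ContinuousLinearMap.opNorm_nonneg _ _ _ _ (Submodule.seminormedAddCommGroup _) _
      _ _ (Submodule.normedSpace _) _ _ Φ, fun v => ?_⟩
    have h2 : restrB d ℓ 14 v = Φ (e v) := by
      rw [hΦ, LinearMap.coe_toContinuousLinearMap']
      show restrB d ℓ 14 v = restrB d ℓ 14 (e.symm (e v))
      rw [LinearEquiv.symm_apply_apply]
    have h4 : ‖e v‖ = ‖restrB d ℓ 1 v‖ := by
      have hcoe : ((e v : LinearMap.range (restrB d ℓ 1)) : C(Metric.closedBall
          (0 : EuclideanSpace ℝ (Fin d)) 1, ℝ)) = restrB d ℓ 1 v := by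
        rw [he]; exact LinearEquiv.ofInjective_apply _ v
      rw [← hcoe]
      rfl
    rw [h2, ← h4]
    exact @ContinuousLinearMap.le_opNorm _ _ _ _ (Submodule.seminormedAddCommGroup _) _
      _ _ (Submodule.normedSpace _) _ _ _ Φ _
  refine ⟨c₀ + 1, by linarith, ?_⟩
  intro p hdeg ξ B hB hbound y hy
  obtain ⟨x, hx34, hxd⟩ := exists_far_point hd ξ
  set f : Fin d → MvPolynomial (Fin d) ℝ :=
    fun i => MvPolynomial.C (x i) + MvPolynomial.C ((8:ℝ)⁻¹) * MvPolynomial.X i with hf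
  have hfdeg : ∀ i, (f i).totalDegree ≤ 1 := by
    intro i
    refine le_trans (MvPolynomial.totalDegree_add _ _) (max_le ?_ ?_)
    · simp [MvPolynomial.totalDegree_C]
    · exact (MvPolynomial.totalDegree_mul _ _).trans
        (by simp [MvPolynomial.totalDegree_C, MvPolynomial.totalDegree_X])
  have keyev : ∀ w : EuclideanSpace ℝ (Fin d),
      pev (MvPolynomial.bind₁ f p) w = pev p (x + (8:ℝ)⁻¹ • w) := by
    intro w
    have hmain := MvPolynomial.eval₂Hom_bind₁ (RingHom.id ℝ) (fun i => w i) f p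
    have h2 : (fun i => MvPolynomial.eval₂Hom (RingHom.id ℝ) (fun i => w i) (f i))
        = (fun i => (x + (8:ℝ)⁻¹ • w) i) := by
      funext i
      show MvPolynomial.eval (fun i => w i) (f i) = _
      rw [hf]
      simp only [map_add, map_mul, MvPolynomial.eval_C, MvPolynomial.eval_X]
      show x i + 8⁻¹ * w i = (x + (8:ℝ)⁻¹ • w) i
      simp [PiLp.add_apply, PiLp.smul_apply]
    show MvPolynomial.eval₂Hom (RingHom.id ℝ) (fun i => w i) (MvPolynomial.bind₁ f p) = _
    rw [hmain, h2]
    rfl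
  have hqmem : MvPolynomial.bind₁ f p ∈ MvPolynomial.restrictTotalDegree (Fin d) ℝ ℓ :=
    (MvPolynomial.mem_restrictTotalDegree _ _ _).2
      ((totalDegree_bind₁_le f hfdeg p).trans hdeg)
  have hTB : ‖restrB d ℓ 1 ⟨MvPolynomial.bind₁ f p, hqmem⟩‖ ≤ B := by
    rw [ContinuousMap.norm_le _ hB]
    rintro ⟨w, hw⟩
    have hw' : ‖w‖ ≤ 1 := by rwa [Metric.mem_closedBall, dist_zero_right] at hw
    rw [restrB_apply, Real.norm_eq_abs]
    show |pev (MvPolynomial.bind₁ f p) w| ≤ B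
    rw [keyev w]
    apply hbound
    constructor
    · rw [Metric.mem_ball, dist_zero_right]
      have hadd : ‖x + (8:ℝ)⁻¹ • w‖ ≤ ‖x‖ + ‖(8:ℝ)⁻¹ • w‖ := norm_add_le _ _
      rw [norm_smul, Real.norm_eq_abs] at hadd
      have h8 : |(8:ℝ)⁻¹| * ‖w‖ ≤ 8⁻¹ := by
        rw [abs_of_pos (by norm_num : (0:ℝ) < 8⁻¹)]
        nlinarith [norm_nonneg w]
      rw [hx34] at hadd
      linarith
    · intro hmem
      rw [Metric.mem_ball] at hmem
      have htri : dist x ξ ≤ dist x (x + (8:ℝ)⁻¹ • w) + dist (x + (8:ℝ)⁻¹ • w) ξ :=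
        dist_triangle _ _ _
      have hdx : dist x (x + (8:ℝ)⁻¹ • w) ≤ 1/8 := by
        rw [dist_eq_norm]
        have hxx : x - (x + (8:ℝ)⁻¹ • w) = -((8:ℝ)⁻¹ • w) := by module
        rw [hxx, norm_neg, norm_smul, Real.norm_eq_abs,
          abs_of_pos (by norm_num : (0:ℝ) < 8⁻¹)]
        nlinarith [norm_nonneg w]
      linarith
  set w : EuclideanSpace ℝ (Fin d) := (8:ℝ) • (y - x) with hwdef
  have hyn : ‖y‖ < 1 := by rwa [Metric.mem_ball, dist_zero_right] at hy
  have hwn : ‖w‖ ≤ 14 := by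
    rw [hwdef, norm_smul, Real.norm_eq_abs, abs_of_pos (by norm_num : (0:ℝ) < 8)]
    have hsub : ‖y - x‖ ≤ ‖y‖ + ‖x‖ := norm_sub_le _ _
    rw [hx34] at hsub
    nlinarith
  have hwmem : w ∈ Metric.closedBall (0 : EuclideanSpace ℝ (Fin d)) 14 := by
    rw [Metric.mem_closedBall, dist_zero_right]; exact hwn
  have hyx : x + (8:ℝ)⁻¹ • w = y := by rw [hwdef]; module
  have h1 : pev p y = (restrB d ℓ 14 ⟨MvPolynomial.bind₁ f p, hqmem⟩) ⟨w, hwmem⟩ := by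
    rw [restrB_apply]
    show pev p y = pev (MvPolynomial.bind₁ f p) w
    rw [keyev w, hyx]
  calc |pev p y| = ‖(restrB d ℓ 14 ⟨MvPolynomial.bind₁ f p, hqmem⟩) ⟨w, hwmem⟩‖ := by
        rw [h1, Real.norm_eq_abs]
    _ ≤ ‖restrB d ℓ 14 ⟨MvPolynomial.bind₁ f p, hqmem⟩‖ := ContinuousMap.norm_coe_le_norm _ _
    _ ≤ c₀ * ‖restrB d ℓ 1 ⟨MvPolynomial.bind₁ f p, hqmem⟩‖ := hc _
    _ ≤ c₀ * B := mul_le_mul_of_nonneg_left hTB hc₀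
    _ ≤ (c₀ + 1) * B := mul_le_mul_of_nonneg_right (by linarith) hB
end
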